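/- Let σ > 0, θ(r) = (σ²/2 + √(σ⁴/4 + 2σ² r))/σ², and let F be a probability distribution on (0,∞) with discount function h_F(t) = ∫₀^∞ e^{-r t} dF(r). Then ∫₀^∞ ((θ(r)-1)/r) dF(r) = ∫₀^∞ h_F(s) ((√2/σ) f(s; σ²/8) - 1/2) ds, where f(s;C) = (1/√(πs)) (e^{-C s} + √(π C s) erf(√(C s))), assuming the relevant integrals are finite so Fubini's theorem applies. -/

import Mathlib

open Real MeasureTheory Set

/-- The Gauss error function. -/
noncomputable def erf (x : ℝ) : ℝ := (2 / Real.sqrt π) * ∫ t in (0:ℝ)..x, Real.exp (-t^2)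

/-- The kernel `f(s; C)`. -/
noncomputable def fker (s C : ℝ) : ℝ :=
  (1 / Real.sqrt (π * s)) * (Real.exp (-C * s) + Real.sqrt (π * C * s) * erf (Real.sqrt (C * s)))

/-- The positive root `θ(r)` of `(1/2)σ²θ² - (1/2)σ²θ - r = 0`. -/
noncomputable def θfun (σ r : ℝ) : ℝ :=
  (σ^2 / 2 + Real.sqrt (σ^4 / 4 + 2 * σ^2 * r)) / σ^2

/-- The discount function induced by the weighting distribution `F`. -/
noncomputable def discount (F : Measure ℝ) (t : ℝ) : ℝ := ∫ r, Real.exp (-r * t) ∂F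

lemma cont_gauss : Continuous (fun t : ℝ => Real.exp (-t^2)) := by continuity

lemma hasDerivAt_erf (x : ℝ) :
    HasDerivAt erf (2 / Real.sqrt π * Real.exp (-x^2)) x := by
  have h : HasDerivAt (fun u : ℝ => ∫ t in (0:ℝ)..u, Real.exp (-t^2)) (Real.exp (-x^2)) x := by
    apply intervalIntegral.integral_hasDerivAt_right
    · exact (cont_gauss).intervalIntegrable _ _
    · exact cont_gauss.stronglyMeasurable.stronglyMeasurableAtFilter
    · exact cont_gauss.continuousAt
  exact h.const_mul _

lemma continuous_erf : Continuous erf :=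
  continuous_iff_continuousAt.2 fun x => (hasDerivAt_erf x).continuousAt

lemma erf_zero : erf 0 = 0 := by simp [erf]

lemma integral_gauss_Ioi : ∫ t in Ioi (0:ℝ), Real.exp (-t^2) = Real.sqrt π / 2 := by
  have h := integral_gaussian_Ioi 1
  simpa using h

lemma intOn_gauss (a : ℝ) : IntegrableOn (fun t : ℝ => Real.exp (-t^2)) (Ioi a) := by
  have : Integrable (fun t : ℝ => Real.exp (-(1:ℝ) * t^2)) := integrable_exp_neg_mul_sq one_pos
  simpa using this.integrableOn

lemma one_sub_erf (x : ℝ) (hx : 0 ≤ x) :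
    1 - erf x = (2 / Real.sqrt π) * ∫ t in Ioi x, Real.exp (-t^2) := by
  have hsplit : (∫ t in Ioc 0 x, Real.exp (-t^2)) + ∫ t in Ioi x, Real.exp (-t^2)
      = ∫ t in Ioi (0:ℝ), Real.exp (-t^2) := by
    rw [← setIntegral_union (Ioc_disjoint_Ioi le_rfl) measurableSet_Ioi
      ((intOn_gauss 0).mono_set Ioc_subset_Ioi_self) (intOn_gauss x),
      Ioc_union_Ioi_eq_Ioi hx]
  have h0 : Real.sqrt π ≠ 0 := by positivity
  have : erf x = (2 / Real.sqrt π) * ∫ t in Ioc 0 x, Real.exp (-t^2) := by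
    rw [erf, intervalIntegral.integral_of_le hx]
  have hIoc : (∫ t in Ioc 0 x, Real.exp (-t^2)) = Real.sqrt π / 2 - ∫ t in Ioi x, Real.exp (-t^2) := by
    rw [← integral_gauss_Ioi]; linarith [hsplit]
  rw [this, hIoc]
  field_simp
  ring

lemma tendsto_erf : Filter.Tendsto erf Filter.atTop (nhds 1) := by
  have h := intervalIntegral_tendsto_integral_Ioi 0 (intOn_gauss 0) Filter.tendsto_id
  rw [integral_gauss_Ioi] at h
  have h2 := h.const_mul (2 / Real.sqrt π)
  have h0 : Real.sqrt π ≠ 0 := by positivity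
  have : 2 / Real.sqrt π * (Real.sqrt π / 2) = 1 := by field_simp
  rw [this] at h2
  exact h2

lemma integral_t_gauss (x : ℝ) (hx : 0 ≤ x) :
    (∫ t in Ioi x, t * Real.exp (-t^2)) = Real.exp (-x^2) / 2 ∧
      IntegrableOn (fun t : ℝ => t * Real.exp (-t^2)) (Ioi x) := by
  have hderiv : ∀ t ∈ Ioi x, HasDerivAt (fun t : ℝ => -Real.exp (-t^2) / 2)
      (t * Real.exp (-t^2)) t := by
    intro t _
    have h1 : HasDerivAt (fun t : ℝ => -t^2) (-(2*t)) t := by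
      exact ((hasDerivAt_pow 2 t).neg).congr_deriv (by norm_num)
    have h2 := (h1.exp).neg.div_const 2
    refine h2.congr_deriv ?_
    ring
  have hnonneg : ∀ t ∈ Ioi x, 0 ≤ t * Real.exp (-t^2) := fun t ht =>
    mul_nonneg (le_trans hx (le_of_lt ht)) (Real.exp_nonneg _)
  have hcont : ContinuousWithinAt (fun t : ℝ => -Real.exp (-t^2) / 2) (Ici x) x := by
    exact ((cont_gauss.neg).div_const 2).continuousWithinAt
  have htend : Filter.Tendsto (fun t : ℝ => -Real.exp (-t^2) / 2) Filter.atTop (nhds 0) := by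
    have : Filter.Tendsto (fun t : ℝ => -t^2) Filter.atTop Filter.atBot := by
      simpa using (Filter.tendsto_pow_atTop (two_ne_zero)).neg
    have := (Real.tendsto_exp_atBot.comp this).neg.div_const 2
    simpa using this
  constructor
  · have := integral_Ioi_of_hasDerivAt_of_nonneg hcont hderiv hnonneg htend
    rw [this]; ring
  · exact integrableOn_Ioi_deriv_of_nonneg hcont hderiv hnonneg htend

lemma one_sub_erf_le {x : ℝ} (hx : 0 < x) :
    1 - erf x ≤ Real.exp (-x^2) / (x * Real.sqrt π) := by
  obtain ⟨hval, hint⟩ := integral_t_gauss x hx.le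
  have hmono : (∫ t in Ioi x, Real.exp (-t^2)) ≤ ∫ t in Ioi x, (t/x) * Real.exp (-t^2) := by
    apply setIntegral_mono_on (intOn_gauss x) (by have h := hint.div_const x; simp only [div_mul_eq_mul_div]; exact h)
      measurableSet_Ioi
    intro t ht
    have h1 : (1:ℝ) ≤ t / x := (one_le_div hx).2 (le_of_lt ht)
    nth_rewrite 1 [← one_mul (Real.exp (-t^2))]
    exact mul_le_mul_of_nonneg_right h1 (Real.exp_nonneg _)
  have heq : (∫ t in Ioi x, (t/x) * Real.exp (-t^2)) = Real.exp (-x^2) / (2*x) := by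
    have : ∀ t : ℝ, (t/x) * Real.exp (-t^2) = (t * Real.exp (-t^2)) / x := by
      intro t; ring
    simp_rw [this, integral_div, hval]
    field_simp
  rw [one_sub_erf x hx.le]
  have h0 : (0:ℝ) < Real.sqrt π := Real.sqrt_pos.2 Real.pi_pos
  calc 2 / Real.sqrt π * ∫ t in Ioi x, Real.exp (-t^2)
      ≤ 2 / Real.sqrt π * (Real.exp (-x^2) / (2*x)) := by
        apply mul_le_mul_of_nonneg_left _ (by positivity)
        rw [← heq]; exact hmono
    _ = Real.exp (-x^2) / (x * Real.sqrt π) := by field_simp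
lemma tendsto_sqrt_atTop : Filter.Tendsto Real.sqrt Filter.atTop Filter.atTop := by
  apply Filter.tendsto_atTop_atTop_of_monotone (fun a b h => Real.sqrt_le_sqrt h)
  intro b
  exact ⟨b^2, by rw [Real.sqrt_sq_eq_abs]; exact le_abs_self b⟩

lemma fker_eq {s C : ℝ} (hs : 0 < s) (hC : 0 < C) :
    fker s C = Real.exp (-C*s) / (Real.sqrt π * Real.sqrt s)
      + Real.sqrt C * erf (Real.sqrt (C*s)) := by
  have hπs : Real.sqrt (π*s) = Real.sqrt π * Real.sqrt s := Real.sqrt_mul pi_pos.le s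
  have hπCs : Real.sqrt (π*C*s) = Real.sqrt π * Real.sqrt s * Real.sqrt C := by
    rw [show π*C*s = (π*s)*C by ring, Real.sqrt_mul (by positivity), hπs]
  have h1 : (0:ℝ) < Real.sqrt π * Real.sqrt s := by positivity
  rw [fker, hπs, hπCs]
  field_simp

lemma hasDerivAt_E {c s : ℝ} (hc : 0 < c) (hs : 0 < s) :
    HasDerivAt (fun u : ℝ => erf (Real.sqrt (c*u)))
      (Real.sqrt c * Real.exp (-(c*s)) / (Real.sqrt π * Real.sqrt s)) s := by
  have h1 : HasDerivAt (fun u : ℝ => c * u) c s := by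
    simpa using (hasDerivAt_id s).const_mul c
  have h2 : HasDerivAt Real.sqrt (1 / (2 * Real.sqrt (c*s))) (c*s) :=
    Real.hasDerivAt_sqrt (by positivity)
  have h3 := h2.comp s h1
  have h4 := (hasDerivAt_erf (Real.sqrt (c*s))).comp s h3
  refine h4.congr_deriv ?_
  rw [Real.sq_sqrt (by positivity : (0:ℝ) ≤ c*s)]
  rw [Real.sqrt_mul hc.le]
  have hcs : Real.sqrt c ≠ 0 := by positivity
  have hss : Real.sqrt s ≠ 0 := by positivity
  have hπ : Real.sqrt π ≠ 0 := by positivity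
  have hcc : Real.sqrt c * Real.sqrt c = c := Real.mul_self_sqrt hc.le
  field_simp
  rw [← hcc]
  ring_nf
  rw [Real.sqrt_sq (Real.sqrt_nonneg c)]

lemma hKC (σ : ℝ) (hσ : 0 < σ) : (Real.sqrt 2 / σ) * Real.sqrt (σ^2/8) = 1/2 := by
  have hsC : Real.sqrt (σ^2/8) = σ / (2*Real.sqrt 2) := by
    rw [show σ^2/8 = (σ/(2*Real.sqrt 2))^2 by
        rw [div_pow, mul_pow, Real.sq_sqrt (by norm_num : (0:ℝ) ≤ 2)]; norm_num,
      Real.sqrt_sq (by positivity)]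
  have h2 : Real.sqrt 2 ≠ 0 := by positivity
  have h2' : Real.sqrt 2 * Real.sqrt 2 = 2 := Real.mul_self_sqrt (by norm_num)
  rw [hsC]
  field_simp

lemma g_nonneg (σ : ℝ) (hσ : 0 < σ) {s : ℝ} (hs : 0 < s) :
    0 ≤ Real.sqrt 2 / σ * fker s (σ^2/8) - 1/2 := by
  set C := σ^2/8 with hCdef
  have hC : 0 < C := by positivity
  set K := Real.sqrt 2 / σ with hKdef
  have hK : 0 < K := by positivity
  have hKC' : K * Real.sqrt C = 1/2 := hKC σ hσ
  have hx : 0 < Real.sqrt (C*s) := Real.sqrt_pos.2 (by positivity)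
  have hbound := one_sub_erf_le hx
  rw [Real.sq_sqrt (by positivity : (0:ℝ) ≤ C*s)] at hbound
  have hxeq : Real.sqrt (C*s) = Real.sqrt C * Real.sqrt s := Real.sqrt_mul hC.le s
  rw [fker_eq hs hC]
  -- goal: 0 ≤ K * (exp(-C*s)/(√π √s) + √C * erf √(C*s)) - 1/2
  have h4 : Real.sqrt C * (1 - erf (Real.sqrt (C*s)))
      ≤ Real.exp (-C*s) / (Real.sqrt π * Real.sqrt s) := by
    have h2 := mul_le_mul_of_nonneg_left hbound (Real.sqrt_nonneg C)
    have h3 : Real.sqrt C * (Real.exp (-(C*s)) / (Real.sqrt (C*s) * Real.sqrt π))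
        = Real.exp (-C*s) / (Real.sqrt π * Real.sqrt s) := by
      rw [hxeq, neg_mul]
      have hC0 : Real.sqrt C ≠ 0 := by positivity
      have hs0 : Real.sqrt s ≠ 0 := by positivity
      have hπ0 : Real.sqrt π ≠ 0 := by positivity
      field_simp
    rw [h3] at h2
    exact h2
  rw [← hKC']
  have h5 := mul_le_mul_of_nonneg_left h4 hK.le
  nlinarith [h5]

lemma deriv_algebra (r CC K P Q E SC Sb Sπ Ss : ℝ) (hC : SC*SC = CC) (hb : Sb*Sb = r + CC)
    (hπ : Sπ ≠ 0) (hs : Ss ≠ 0) (hr : r ≠ 0) :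
    P * (K * (Q / (Sπ*Ss) + SC * E) - 1/2)
      = -(1/r) * (P * (-r * 1) * (K * SC * E - 1/2) + P * (K * SC * (SC * Q / (Sπ*Ss))))
        + K * Sb / r * (Sb * (P * Q) / (Sπ*Ss)) := by
  field_simp
  linear_combination (2*P*K*Q) * hC - (2*P*K*Q) * hb

lemma key_integral (σ r : ℝ) (hσ : 0 < σ) (hr : 0 < r) :
    IntegrableOn (fun s => Real.exp (-r*s) * (Real.sqrt 2 / σ * fker s (σ^2/8) - 1/2)) (Ioi (0:ℝ))
    ∧ (∫ s in Ioi (0:ℝ), Real.exp (-r*s) * (Real.sqrt 2 / σ * fker s (σ^2/8) - 1/2))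
        = (θfun σ r - 1) / r := by
  set C := σ^2/8 with hCdef
  have hC : 0 < C := by positivity
  set K := Real.sqrt 2 / σ with hKdef
  set b := r + C with hbdef
  have hb : 0 < b := by positivity
  set Φ : ℝ → ℝ := fun s =>
    (-(1/r)) * (Real.exp (-r*s) * (K * Real.sqrt C * erf (Real.sqrt (C*s)) - 1/2))
      + (K * Real.sqrt b / r) * erf (Real.sqrt (b*s)) with hΦdef
  have hEc : ∀ c : ℝ, Continuous (fun s : ℝ => erf (Real.sqrt (c*s))) := fun c =>
    continuous_erf.comp (Real.continuous_sqrt.comp (continuous_const.mul continuous_id))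
  have hexpc : Continuous (fun s : ℝ => Real.exp (-r*s)) :=
    Real.continuous_exp.comp (continuous_const.mul continuous_id)
  have hΦcont : Continuous Φ :=
    (continuous_const.mul (hexpc.mul ((continuous_const.mul (hEc C)).sub
      continuous_const))).add (continuous_const.mul (hEc b))
  have hcont : ContinuousWithinAt Φ (Ici 0) 0 := hΦcont.continuousWithinAt
  have hderiv : ∀ s ∈ Ioi (0:ℝ), HasDerivAt Φ
      (Real.exp (-r*s) * (K * fker s C - 1/2)) s := by
    intro s hs
    have hs' : (0:ℝ) < s := hs
    have hE_C := hasDerivAt_E hC hs'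
    have hE_b := hasDerivAt_E hb hs'
    have h1 : HasDerivAt (fun u : ℝ => Real.exp (-r*u)) (Real.exp (-r*s) * (-r * 1)) s :=
      ((hasDerivAt_id s).const_mul (-r)).exp
    have hsub : HasDerivAt (fun u : ℝ => K * Real.sqrt C * erf (Real.sqrt (C*u)) - 1/2)
        (K * Real.sqrt C * (Real.sqrt C * Real.exp (-(C*s)) / (Real.sqrt π * Real.sqrt s))) s :=
      (hE_C.const_mul (K * Real.sqrt C)).sub_const (1/2)
    have hterm := ((h1.mul hsub).const_mul (-(1/r))).add
      (hE_b.const_mul (K * Real.sqrt b / r))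
    refine hterm.congr_deriv ?_
    rw [fker_eq hs' hC]
    have hbb : Real.sqrt b * Real.sqrt b = b := Real.mul_self_sqrt hb.le
    have hCC : Real.sqrt C * Real.sqrt C = C := Real.mul_self_sqrt hC.le
    have hbexp : Real.exp (-(b*s)) = Real.exp (-r*s) * Real.exp (-(C*s)) := by
      rw [← Real.exp_add]; congr 1; rw [hbdef]; ring
    have hCneg : Real.exp (-C*s) = Real.exp (-(C*s)) := by rw [neg_mul]
    have hπ0 : Real.sqrt π ≠ 0 := by positivity
    have hs0 : Real.sqrt s ≠ 0 := by positivity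
    have hr0 : r ≠ 0 := hr.ne'
    rw [hCneg, hbexp]
    exact (deriv_algebra r C K (Real.exp (-r*s)) (Real.exp (-(C*s))) (erf (Real.sqrt (C*s)))
      (Real.sqrt C) (Real.sqrt b) (Real.sqrt π) (Real.sqrt s) hCC (hbdef ▸ hbb) hπ0 hs0 hr0).symm
  have hnonneg : ∀ s ∈ Ioi (0:ℝ), 0 ≤ Real.exp (-r*s) * (K * fker s C - 1/2) :=
    fun s hs => mul_nonneg (Real.exp_nonneg _) (g_nonneg σ hσ hs)
  have hEtend : ∀ c : ℝ, 0 < c →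
      Filter.Tendsto (fun s : ℝ => erf (Real.sqrt (c*s))) Filter.atTop (nhds 1) := by
    intro c hc
    have h1 : Filter.Tendsto (fun s : ℝ => c*s) Filter.atTop Filter.atTop :=
      Filter.Tendsto.const_mul_atTop hc Filter.tendsto_id
    exact tendsto_erf.comp (_root_.tendsto_sqrt_atTop.comp h1)
  have hP0 : Filter.Tendsto (fun s : ℝ => Real.exp (-r*s)) Filter.atTop (nhds 0) := by
    have h1 : Filter.Tendsto (fun s : ℝ => r*s) Filter.atTop Filter.atTop :=
      Filter.Tendsto.const_mul_atTop hr Filter.tendsto_id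
    have h2 := Real.tendsto_exp_neg_atTop_nhds_zero.comp h1
    have heq : (fun s : ℝ => Real.exp (-r*s)) = (fun x : ℝ => Real.exp (-x)) ∘ (fun s : ℝ => r*s) := by
      funext u; simp [Function.comp, neg_mul]
    rw [heq]; exact h2
  have hΦtend : Filter.Tendsto Φ Filter.atTop (nhds (K * Real.sqrt b / r)) := by
    have t1 := ((hP0.mul (((hEtend C hC).const_mul (K * Real.sqrt C)).sub_const
      (1/2))).const_mul (-(1/r))).add ((hEtend b hb).const_mul (K * Real.sqrt b / r))
    have : (-(1/r)) * (0 * (K * Real.sqrt C * 1 - 1/2)) + (K * Real.sqrt b / r) * 1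
        = K * Real.sqrt b / r := by ring
    rw [this] at t1
    exact t1
  have hval := integral_Ioi_of_hasDerivAt_of_nonneg hcont hderiv hnonneg hΦtend
  have hintOn := integrableOn_Ioi_deriv_of_nonneg hcont hderiv hnonneg hΦtend
  have hΦ0 : Φ 0 = 1/(2*r) := by
    simp [hΦdef, mul_zero, Real.sqrt_zero, erf_zero, Real.exp_zero]
  have hθ : Real.sqrt (σ^4/4 + 2*σ^2*r) = σ * Real.sqrt 2 * Real.sqrt b := by
    rw [show σ^4/4 + 2*σ^2*r = (σ*Real.sqrt 2)^2 * b by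
        rw [mul_pow, Real.sq_sqrt (by norm_num : (0:ℝ) ≤ 2), hbdef, hCdef]; ring,
      Real.sqrt_mul (by positivity), Real.sqrt_sq (by positivity)]
  refine ⟨hintOn, ?_⟩
  rw [hval, hΦ0, θfun, hθ]
  have hσ0 : σ ≠ 0 := hσ.ne'
  have hr0 : r ≠ 0 := hr.ne'
  rw [hKdef]
  field_simp
  ring

theorem stmt7 (σ : ℝ) (hσ : 0 < σ) (F : Measure ℝ) [IsProbabilityMeasure F]
    (hFc : F (Ioi (0:ℝ))ᶜ = 0)
    (hInt1 : Integrable (fun r => (θfun σ r - 1) / r) F)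
    (hInt2 : IntegrableOn
      (fun s => discount F s * ((Real.sqrt 2 / σ) * fker s (σ^2 / 8) - 1/2)) (Ioi (0:ℝ))) :
    ∫ r, (θfun σ r - 1) / r ∂F =
      ∫ s in Ioi (0:ℝ), discount F s * ((Real.sqrt 2 / σ) * fker s (σ^2 / 8) - 1/2) := by
  have hae : ∀ᵐ r ∂F, 0 < r := by
    have h : {a : ℝ | ¬ 0 < a} = (Ioi (0:ℝ))ᶜ := by ext a; simp
    rw [ae_iff, h]; exact hFc
  have hgm : Measurable (fun s : ℝ => Real.sqrt 2 / σ * fker s (σ^2/8) - 1/2) := by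
    have hE : Continuous (fun s : ℝ => erf (Real.sqrt (σ^2/8 * s))) :=
      continuous_erf.comp (Real.continuous_sqrt.comp (continuous_const.mul continuous_id))
    have h1 : Measurable (fun s : ℝ => 1 / Real.sqrt (π * s)) :=
      measurable_const.div
        ((Real.continuous_sqrt.comp (continuous_const.mul continuous_id)).measurable)
    have h2 : Measurable (fun s : ℝ => fker s (σ^2/8)) := by
      unfold fker
      exact h1.mul
        (((Real.continuous_exp.comp (continuous_const.mul continuous_id)).measurable).add
          (((Real.continuous_sqrt.comp (continuous_const.mul continuous_id)).measurable).mul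
            hE.measurable))
    exact (measurable_const.mul h2).sub measurable_const
  have hmeas : Measurable (Function.uncurry fun r s : ℝ =>
      Real.exp (-r*s) * (Real.sqrt 2 / σ * fker s (σ^2/8) - 1/2)) := by
    have : Continuous (fun p : ℝ × ℝ => Real.exp (-p.1 * p.2)) :=
      Real.continuous_exp.comp ((continuous_fst.neg).mul continuous_snd)
    exact this.measurable.mul (hgm.comp measurable_snd)
  have hint : Integrable (Function.uncurry fun r s : ℝ =>
      Real.exp (-r*s) * (Real.sqrt 2 / σ * fker s (σ^2/8) - 1/2))
      (F.prod (volume.restrict (Ioi (0:ℝ)))) := by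
    rw [integrable_prod_iff hmeas.aestronglyMeasurable]
    constructor
    · filter_upwards [hae] with r hr
      exact (key_integral σ r hσ hr).1
    · apply Integrable.congr hInt1
      filter_upwards [hae] with r hr
      rw [← (key_integral σ r hσ hr).2]
      refine setIntegral_congr_fun measurableSet_Ioi (fun s hs => ?_)
      exact (Real.norm_of_nonneg (mul_nonneg (Real.exp_nonneg _) (g_nonneg σ hσ hs))).symm
  have hswap := integral_integral_swap hint
  calc ∫ r, (θfun σ r - 1) / r ∂F
      = ∫ r, (∫ s in Ioi (0:ℝ),
          Real.exp (-r*s) * (Real.sqrt 2 / σ * fker s (σ^2/8) - 1/2)) ∂F := by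
        refine integral_congr_ae ?_
        filter_upwards [hae] with r hr
        exact ((key_integral σ r hσ hr).2).symm
    _ = ∫ s in Ioi (0:ℝ), (∫ r, Real.exp (-r*s) * (Real.sqrt 2 / σ * fker s (σ^2/8) - 1/2) ∂F) := hswap
    _ = ∫ s in Ioi (0:ℝ), discount F s * ((Real.sqrt 2 / σ) * fker s (σ^2 / 8) - 1/2) := by
        refine integral_congr_ae (Filter.Eventually.of_forall fun s => ?_)
        show _ = discount F s * _
        unfold discount
        exact integral_mul_const _ _
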